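/- Let K ⊆ ℝ/ℤ be a closed E_d-invariant set with the non-wandering property, and let y ∈ K be a regular critical point. Then y has exactly two E_d-preimages lying in K, and they are given by the two one-sided continuous inverse branches η_- and η_+ at y, which select distinct branches of E_d^{-1}. -/

import Mathlib

/-- The expanding map `E_d(x) = d x mod 1` on the circle. -/
noncomputable def Ed (d : ℕ) : UnitAddCircle → UnitAddCircle := fun x => d • x

/-- The set of critical values of `K`: points of `K` with more than one `E_d`-preimage in `K`. -/
def critVals (d : ℕ) (K : Set UnitAddCircle) : Set UnitAddCircle :=
  {x | x ∈ K ∧ ∃ y ∈ K, ∃ z ∈ K, y ≠ z ∧ Ed d y = x ∧ Ed d z = x}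

/-- `K` has the non-wandering property: every point of `K` is non-wandering for `E_d|_K`. -/
def NonWanderingOn (d : ℕ) (K : Set UnitAddCircle) : Prop :=
  ∀ x ∈ K, ∀ ε : ℝ, 0 < ε →
    ∃ y ∈ K, ∃ n : ℕ, 0 < n ∧ dist x y < ε ∧ dist x ((Ed d)^[n] y) < ε

/-- A one-sided arc at `x`: the image of `x + t` for `t` ranging over a set of reals. -/
def sideArc (x : UnitAddCircle) (s : Set ℝ) : Set UnitAddCircle :=
  (fun t : ℝ => x + (t : UnitAddCircle)) '' s

lemma coe_smul' (n : ℕ) (t : ℝ) : (n : ℕ) • ((t : ℝ) : UnitAddCircle) = (((n : ℝ) * t : ℝ) : UnitAddCircle) := by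
  push_cast [← AddCircle.coe_nsmul]
  norm_num [nsmul_eq_mul]

lemma Ed_add (d : ℕ) (x : UnitAddCircle) (t : ℝ) :
    Ed d (x + (t : UnitAddCircle)) = Ed d x + (((d : ℝ) * t : ℝ) : UnitAddCircle) := by
  show d • (x + _) = _
  rw [smul_add, coe_smul']
  rfl

lemma Ed_iter_add (d n : ℕ) (x : UnitAddCircle) (t : ℝ) :
    (Ed d)^[n] (x + (t : UnitAddCircle)) = (Ed d)^[n] x + (((d : ℝ)^n * t : ℝ) : UnitAddCircle) := by
  induction n generalizing x t with
  | zero => simp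
  | succ n ih =>
    rw [Function.iterate_succ_apply, Ed_add, ih, ← Function.iterate_succ_apply]
    congr 2
    ring

lemma norm_coe_eq {t : ℝ} (h : |t| ≤ 1/2) : ‖(t : UnitAddCircle)‖ = |t| := by
  rw [AddCircle.norm_coe_eq_abs_iff (1:ℝ) one_ne_zero]
  simpa using h

lemma exists_lift (x : UnitAddCircle) : ∃ t : ℝ, x = (t : UnitAddCircle) ∧ |t| = ‖x‖ ∧ |t| ≤ 1/2 := by
  induction x using QuotientAddGroup.induction_on with
  | H s =>
    refine ⟨s - round s, ?_, ?_, ?_⟩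
    · rw [AddCircle.coe_sub]
      have : ((round s : ℝ) : UnitAddCircle) = 0 := by
        rw [AddCircle.coe_eq_zero_iff]
        exact ⟨round s, by simp⟩
      rw [this, sub_zero]
    · rw [AddCircle.norm_eq]; norm_num
    · exact abs_sub_round s

lemma coe_int_eq_zero (k : ℤ) : (((k : ℝ)) : UnitAddCircle) = 0 := by
  rw [AddCircle.coe_eq_zero_iff]; exact ⟨k, by simp⟩

lemma torsion_finite (d : ℕ) (hd : 1 ≤ d) : {u : UnitAddCircle | d • u = 0}.Finite := by
  have hsub : {u : UnitAddCircle | d • u = 0} ⊆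
      (fun r : ℝ => (r : UnitAddCircle)) '' ((fun k : ℤ => (k : ℝ) / d) '' (Set.Icc (-(d:ℤ)) d)) := by
    intro u hu
    obtain ⟨t, rfl, ht, ht2⟩ := exists_lift u
    have h0 : (((d:ℝ) * t : ℝ) : UnitAddCircle) = 0 := by
      rw [← coe_smul']; exact hu
    rw [AddCircle.coe_eq_zero_iff] at h0
    obtain ⟨k, hk⟩ := h0
    simp only [zsmul_eq_mul, mul_one] at hk
    have hdpos : (0:ℝ) < d := by exact_mod_cast hd
    have htk : (k:ℝ)/d = t := by field_simp [hk]; exact hk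
    have habs : |(k:ℝ)| = d * |t| := by rw [← abs_of_pos hdpos, ← abs_mul, hk]
    have hkb : |(k:ℝ)| ≤ (d:ℝ) := by nlinarith
    refine ⟨t, ⟨k, ⟨?_, htk⟩⟩, rfl⟩
    rw [Set.mem_Icc]
    constructor <;> rw [← @Int.cast_le ℝ] <;> push_cast <;>
      cases' abs_le.mp hkb with h1 h2 <;> linarith
  exact Set.Finite.subset (Set.Finite.image _ (Set.Finite.image _ (Set.finite_Icc _ _))) hsub
lemma fiber_finite (d : ℕ) (hd : 1 ≤ d) (y : UnitAddCircle) : {x : UnitAddCircle | Ed d x = y}.Finite := by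
  obtain ⟨s, rfl, -, -⟩ := exists_lift y
  set c₀ : UnitAddCircle := ((s / d : ℝ) : UnitAddCircle) with hc₀
  have hc : Ed d c₀ = ((s:ℝ) : UnitAddCircle) := by
    show d • _ = _
    rw [hc₀, coe_smul']
    congr 1
    field_simp
  have hsub : {x : UnitAddCircle | Ed d x = (s:ℝ)} ⊆ (fun u => c₀ + u) '' {u | d • u = 0} := by
    intro x hx
    refine ⟨x - c₀, ?_, add_sub_cancel _ _⟩
    show d • (x - c₀) = 0
    rw [smul_sub]
    show Ed d x - Ed d c₀ = 0
    rw [hx, hc, sub_self]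
  exact Set.Finite.subset (Set.Finite.image _ (torsion_finite d hd)) hsub

lemma fiber_sep (d : ℕ) (hd : 2 ≤ d) {u v : UnitAddCircle} (h : Ed d u = Ed d v) (hne : u ≠ v) :
    1/(d:ℝ) ≤ dist u v := by
  have hw : d • (u - v) = 0 := by
    rw [smul_sub]; show Ed d u - Ed d v = 0; rw [h, sub_self]
  obtain ⟨t, ht, htn, ht2⟩ := exists_lift (u - v)
  rw [ht, coe_smul', AddCircle.coe_eq_zero_iff] at hw
  obtain ⟨k, hk⟩ := hw
  simp only [zsmul_eq_mul, mul_one] at hk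
  have hdpos : (0:ℝ) < d := by positivity
  have hk0 : k ≠ 0 := by
    rintro rfl
    simp only [Int.cast_zero] at hk
    have ht0 : t = 0 := by
      have := hk.symm
      rcases mul_eq_zero.mp this with h | h
      · exact absurd h (by positivity)
      · exact h
    apply hne
    have : u - v = 0 := by rw [ht, ht0]; simp
    rwa [sub_eq_zero] at this
  have hk1 : (1:ℝ) ≤ |(k:ℝ)| := by
    rw [← Int.cast_abs]
    exact_mod_cast Int.one_le_abs hk0
  have : 1/(d:ℝ) ≤ |t| := by
    have habs : |(k:ℝ)| = d * |t| := by rw [← abs_of_pos hdpos, ← abs_mul, ← hk]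
    rw [div_le_iff₀ hdpos]
    nlinarith
  calc 1/(d:ℝ) ≤ |t| := this
    _ = ‖u - v‖ := htn
    _ = dist u v := (dist_eq_norm u v).symm

lemma Ed_lip (d : ℕ) (u v : UnitAddCircle) : dist (Ed d u) (Ed d v) ≤ d * dist u v := by
  rw [dist_eq_norm, dist_eq_norm]
  have : Ed d u - Ed d v = d • (u - v) := by rw [smul_sub]; rfl
  rw [this]
  calc ‖d • (u - v)‖ ≤ d * ‖u - v‖ := norm_nsmul_le

lemma continuous_coe_circle : Continuous (fun t : ℝ => (t : UnitAddCircle)) :=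
  AddCircle.continuous_mk' 1

lemma branch (d : ℕ) (hd : 2 ≤ d) (y : UnitAddCircle) {a b : ℝ} (hab : a < b)
    (η : UnitAddCircle → UnitAddCircle)
    (hc : ContinuousOn η (sideArc y (Set.Ioo a b)))
    (hsec : ∀ z ∈ sideArc y (Set.Ioo a b), Ed d (η z) = z) :
    ∃ c : UnitAddCircle, Ed d c = y ∧
      ∀ t ∈ Set.Ioo a b, η (y + (t : UnitAddCircle)) = c + ((t / d : ℝ) : UnitAddCircle) := by
  have hd0 : (d:ℝ) ≠ 0 := by positivity
  set g : ℝ → UnitAddCircle := fun t => η (y + (t : UnitAddCircle)) - ((t / d : ℝ) : UnitAddCircle)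
    with hg
  have hmem : ∀ t ∈ Set.Ioo a b, y + (t : UnitAddCircle) ∈ sideArc y (Set.Ioo a b) :=
    fun t ht => Set.mem_image_of_mem _ ht
  have hfib : ∀ t ∈ Set.Ioo a b, Ed d (g t) = y := by
    intro t ht
    have h1 : Ed d (g t) = Ed d (η (y + (t:UnitAddCircle))) - Ed d ((t / d : ℝ) : UnitAddCircle) := by
      show d • _ = _
      rw [hg]
      simp only [smul_sub]
      rfl
    rw [h1, hsec _ (hmem t ht)]
    have h2 : Ed d ((t / d : ℝ) : UnitAddCircle) = ((t:ℝ) : UnitAddCircle) := by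
      show d • _ = _
      rw [coe_smul']
      congr 1
      field_simp
    rw [h2]
    abel
  have hgc : ContinuousOn g (Set.Ioo a b) := by
    apply ContinuousOn.sub
    · exact hc.comp (continuous_const.add continuous_coe_circle).continuousOn hmem
    · exact (continuous_coe_circle.comp (continuous_id.div_const (d:ℝ))).continuousOn
  have hfin : {x : UnitAddCircle | Ed d x = y}.Finite :=
    fiber_finite d (le_trans one_le_two hd) y
  haveI := hfin.to_subtype
  haveI : DiscreteTopology ({x : UnitAddCircle | Ed d x = y} : Set UnitAddCircle) :=
    Finite.instDiscreteTopology
  have ht₀ : (a+b)/2 ∈ Set.Ioo a b := ⟨by linarith, by linarith⟩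
  refine ⟨g ((a+b)/2), hfib _ ht₀, fun t ht => ?_⟩
  have hconst : g t = g ((a+b)/2) :=
    (isPreconnected_Ioo).constant_of_mapsTo (T := {x : UnitAddCircle | Ed d x = y}) (isDiscrete_iff_discreteTopology.mpr this) hgc (fun t ht => (hfib t ht : g t ∈ {x : UnitAddCircle | Ed d x = y})) ht ht₀
  rw [hg] at hconst
  simpa [sub_eq_iff_eq_add, add_comm] using hconst

lemma branch_tendsto (d : ℕ) (hd : 2 ≤ d) (y c : UnitAddCircle) {a b : ℝ}
    (habs : ∀ t ∈ Set.Ioo a b, |t| ≤ 1/2)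
    (η : UnitAddCircle → UnitAddCircle)
    (hform : ∀ t ∈ Set.Ioo a b, η (y + (t : UnitAddCircle)) = c + ((t/d : ℝ) : UnitAddCircle)) :
    Filter.Tendsto η (nhdsWithin y (sideArc y (Set.Ioo a b))) (nhds c) := by
  have hd1 : (1:ℝ) ≤ d := by exact_mod_cast le_trans one_le_two hd
  rw [Metric.tendsto_nhdsWithin_nhds]
  intro δ hδ
  refine ⟨δ, hδ, ?_⟩
  rintro z ⟨t, ht, rfl⟩ hdist
  simp only at hdist ⊢
  have habs' : |t| ≤ 1/2 := habs t ht
  have habsd : |t/d| ≤ |t| := by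
    rw [abs_div, abs_of_pos (by positivity : (0:ℝ) < d)]
    exact div_le_self (abs_nonneg t) hd1
  have h1 : dist (y + (t : UnitAddCircle)) y = |t| := by
    rw [dist_eq_norm, add_sub_cancel_left, norm_coe_eq habs']
  rw [hform t ht, dist_eq_norm, add_sub_cancel_left, norm_coe_eq (le_trans habsd habs')]
  rw [h1] at hdist
  exact lt_of_le_of_lt habsd hdist

theorem stmt4 (d : ℕ) (hd : 2 ≤ d) (K : Set UnitAddCircle)
    (hKne : K.Nonempty) (hKc : IsCompact K) (hinv : Ed d '' K = K)
    (hnw : NonWanderingOn d K)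
    (y : UnitAddCircle) (hy : y ∈ critVals d K)
    (ε : ℝ) (hε : 0 < ε) (hε' : ε < 1 / 2)
    (ηm ηp : UnitAddCircle → UnitAddCircle)
    (hmc : ContinuousOn ηm (sideArc y (Set.Ioo (-ε) 0)))
    (hpc : ContinuousOn ηp (sideArc y (Set.Ioo 0 ε)))
    (hmsel : ∀ z ∈ sideArc y (Set.Ioo (-ε) 0),
      Ed d (ηm z) = z ∧ (z ∈ K → {w : UnitAddCircle | Ed d w = z} ∩ K = {ηm z}))
    (hpsel : ∀ z ∈ sideArc y (Set.Ioo 0 ε),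
      Ed d (ηp z) = z ∧ (z ∈ K → {w : UnitAddCircle | Ed d w = z} ∩ K = {ηp z})) :
    ∃ y₁ y₂ : UnitAddCircle, y₁ ≠ y₂ ∧
      {w : UnitAddCircle | Ed d w = y} ∩ K = {y₁, y₂} ∧
      Filter.Tendsto ηm (nhdsWithin y (sideArc y (Set.Ioo (-ε) 0))) (nhds y₁) ∧
      Filter.Tendsto ηp (nhdsWithin y (sideArc y (Set.Ioo 0 ε))) (nhds y₂) := by
  classical
  have hd1 : (1:ℕ) ≤ d := le_trans one_le_two hd
  have hdR : (2:ℝ) ≤ d := by exact_mod_cast hd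
  have hdpos : (0:ℝ) < d := by linarith
  have hfwd : ∀ z ∈ K, Ed d z ∈ K := by
    intro z hz; rw [← hinv]; exact Set.mem_image_of_mem _ hz
  have hfwd_iter : ∀ n : ℕ, ∀ z ∈ K, (Ed d)^[n] z ∈ K := by
    intro n
    induction n with
    | zero => intro z hz; exact hz
    | succ n ih =>
      intro z hz
      rw [Function.iterate_succ_apply']
      exact hfwd _ (ih z hz)
  obtain ⟨hyK, aa, haK, bb, hbK, habne, hEa, hEb⟩ := hy
  -- the two branch limits
  obtain ⟨y₁, hy₁fib, hm⟩ := branch d hd y (show -ε < 0 by linarith) ηm hmc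
    (fun z hz => (hmsel z hz).1)
  obtain ⟨y₂, hy₂fib, hp⟩ := branch d hd y (show (0:ℝ) < ε from hε) ηp hpc
    (fun z hz => (hpsel z hz).1)
  have htm : Filter.Tendsto ηm (nhdsWithin y (sideArc y (Set.Ioo (-ε) 0))) (nhds y₁) :=
    branch_tendsto d hd y y₁
      (fun t ht => by rw [abs_le]; constructor <;> [linarith [ht.1]; linarith [ht.2]]) ηm hm
  have htp : Filter.Tendsto ηp (nhdsWithin y (sideArc y (Set.Ioo 0 ε))) (nhds y₂) :=
    branch_tendsto d hd y y₂
      (fun t ht => by rw [abs_le]; constructor <;> [linarith [ht.1]; linarith [ht.2]]) ηp hp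
  -- Lemma E: accumulation from one side forces periodic-preimages to agree with that branch
  have lemE_L : (∀ δ : ℝ, 0 < δ → ∃ t, t ∈ Set.Ioo (-ε) 0 ∧ |t| < δ ∧
        (y + (t : UnitAddCircle)) ∈ K) →
      ∀ q : ℕ, 1 ≤ q → (Ed d)^[q] y = y → (Ed d)^[q-1] y = y₁ := by
    intro hacc q hq hqy
    obtain ⟨t, htI, htd, htK⟩ := hacc (ε / (d:ℝ)^q) (by positivity)
    have hdq : (0:ℝ) < (d:ℝ)^q := by positivity
    have hvK : (Ed d)^[q-1] (y + (t:UnitAddCircle)) ∈ K := hfwd_iter _ _ htK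
    have hv : (Ed d)^[q-1] (y + (t:UnitAddCircle)) =
        (Ed d)^[q-1] y + (((d:ℝ)^(q-1) * t : ℝ) : UnitAddCircle) := Ed_iter_add d _ y t
    have hiter : Ed d ((Ed d)^[q-1] (y + (t:UnitAddCircle))) =
        (Ed d)^[q] (y + (t:UnitAddCircle)) := by
      have hq1 : q = (q-1)+1 := by omega
      conv_rhs => rw [hq1]
      rw [Function.iterate_succ_apply']
    have hEv : Ed d ((Ed d)^[q-1] (y + (t:UnitAddCircle))) =
        y + (((d:ℝ)^q * t : ℝ) : UnitAddCircle) := by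
      rw [hiter, Ed_iter_add, hqy]
    have hdqt : (d:ℝ)^q * t ∈ Set.Ioo (-ε) 0 := by
      constructor
      · have h1 : -(ε/(d:ℝ)^q) < t := by
          have h2 := (abs_lt.mp htd).1
          linarith
        have h4 := mul_lt_mul_of_pos_left h1 hdq
        calc -ε = (d:ℝ)^q * (-(ε/(d:ℝ)^q)) := by field_simp
          _ < (d:ℝ)^q * t := h4
      · exact mul_neg_of_pos_of_neg hdq htI.2
    have harc : y + (((d:ℝ)^q * t : ℝ) : UnitAddCircle) ∈ sideArc y (Set.Ioo (-ε) 0) :=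
      ⟨_, hdqt, rfl⟩
    have hKmem : y + (((d:ℝ)^q * t : ℝ) : UnitAddCircle) ∈ K := by
      rw [← hEv]; exact hfwd _ hvK
    have huniq := (hmsel _ harc).2 hKmem
    have hvmem : (Ed d)^[q-1] (y + (t:UnitAddCircle)) ∈
        {w : UnitAddCircle | Ed d w = y + (((d:ℝ)^q * t : ℝ) : UnitAddCircle)} ∩ K := ⟨hEv, hvK⟩
    rw [huniq, Set.mem_singleton_iff] at hvmem
    have hform := hm ((d:ℝ)^q * t) hdqt
    have hdiv : ((d:ℝ)^q * t)/(d:ℝ) = (d:ℝ)^(q-1) * t := by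
      have hq' : (d:ℝ)^q = (d:ℝ)^(q-1) * d := by
        rw [← pow_succ]
        congr 1
        omega
      rw [hq']
      field_simp
    rw [hform, hdiv] at hvmem
    rw [hv] at hvmem
    exact add_right_cancel hvmem
  have lemE_R : (∀ δ : ℝ, 0 < δ → ∃ t, t ∈ Set.Ioo 0 ε ∧ |t| < δ ∧
        (y + (t : UnitAddCircle)) ∈ K) →
      ∀ q : ℕ, 1 ≤ q → (Ed d)^[q] y = y → (Ed d)^[q-1] y = y₂ := by
    intro hacc q hq hqy
    obtain ⟨t, htI, htd, htK⟩ := hacc (ε / (d:ℝ)^q) (by positivity)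
    have hdq : (0:ℝ) < (d:ℝ)^q := by positivity
    have hvK : (Ed d)^[q-1] (y + (t:UnitAddCircle)) ∈ K := hfwd_iter _ _ htK
    have hv : (Ed d)^[q-1] (y + (t:UnitAddCircle)) =
        (Ed d)^[q-1] y + (((d:ℝ)^(q-1) * t : ℝ) : UnitAddCircle) := Ed_iter_add d _ y t
    have hiter : Ed d ((Ed d)^[q-1] (y + (t:UnitAddCircle))) =
        (Ed d)^[q] (y + (t:UnitAddCircle)) := by
      have hq1 : q = (q-1)+1 := by omega
      conv_rhs => rw [hq1]
      rw [Function.iterate_succ_apply']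
    have hEv : Ed d ((Ed d)^[q-1] (y + (t:UnitAddCircle))) =
        y + (((d:ℝ)^q * t : ℝ) : UnitAddCircle) := by
      rw [hiter, Ed_iter_add, hqy]
    have hdqt : (d:ℝ)^q * t ∈ Set.Ioo 0 ε := by
      constructor
      · exact mul_pos hdq htI.1
      · have h1 : t < ε/(d:ℝ)^q := by
          have h2 := abs_lt.mp htd
          linarith [h2.2]
        calc (d:ℝ)^q * t < (d:ℝ)^q * (ε/(d:ℝ)^q) := mul_lt_mul_of_pos_left h1 hdq
          _ = ε := by field_simp
    have harc : y + (((d:ℝ)^q * t : ℝ) : UnitAddCircle) ∈ sideArc y (Set.Ioo 0 ε) :=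
      ⟨_, hdqt, rfl⟩
    have hKmem : y + (((d:ℝ)^q * t : ℝ) : UnitAddCircle) ∈ K := by
      rw [← hEv]; exact hfwd _ hvK
    have huniq := (hpsel _ harc).2 hKmem
    have hvmem : (Ed d)^[q-1] (y + (t:UnitAddCircle)) ∈
        {w : UnitAddCircle | Ed d w = y + (((d:ℝ)^q * t : ℝ) : UnitAddCircle)} ∩ K := ⟨hEv, hvK⟩
    rw [huniq, Set.mem_singleton_iff] at hvmem
    have hform := hp ((d:ℝ)^q * t) hdqt
    have hdiv : ((d:ℝ)^q * t)/(d:ℝ) = (d:ℝ)^(q-1) * t := by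
      have hq' : (d:ℝ)^q = (d:ℝ)^(q-1) * d := by
        rw [← pow_succ]
        congr 1
        omega
      rw [hq']
      field_simp
    rw [hform, hdiv] at hvmem
    rw [hv] at hvmem
    exact add_right_cancel hvmem
  -- common analysis: a K-point close to a fiber point whose image is not y
  have common : ∀ w : UnitAddCircle, Ed d w = y → ∀ δ : ℝ, 0 < δ → δ ≤ ε →
      ∀ u ∈ K, dist w u < δ/(2*d) → Ed d u ≠ y →
      (dist w y₁ < δ ∧ ∃ t, t ∈ Set.Ioo (-ε) 0 ∧ |t| < δ ∧ (y + (t : UnitAddCircle)) ∈ K) ∨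
      (dist w y₂ < δ ∧ ∃ t, t ∈ Set.Ioo 0 ε ∧ |t| < δ ∧ (y + (t : UnitAddCircle)) ∈ K) := by
    intro w hw δ hδ hδε u huK hdwu hEuy
    have hEuK : Ed d u ∈ K := hfwd u huK
    have hdist : dist (Ed d u) y < δ/2 := by
      have h1 : dist (Ed d u) (Ed d w) ≤ d * dist u w := Ed_lip d u w
      rw [hw] at h1
      have h2 : (d:ℝ) * dist u w < (d:ℝ) * (δ/(2*d)) := by
        apply mul_lt_mul_of_pos_left _ hdpos
        rw [dist_comm]
        exact hdwu
      have h3 : (d:ℝ) * (δ/(2*d)) = δ/2 := by field_simp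
      linarith
    obtain ⟨t, htlift, htnorm, ht2⟩ := exists_lift (Ed d u - y)
    have hEu : Ed d u = y + (t : UnitAddCircle) := by rw [← htlift]; abel
    have htd : |t| < δ/2 := by
      rw [htnorm, ← dist_eq_norm]
      exact hdist
    have ht0 : t ≠ 0 := by
      rintro rfl
      apply hEuy
      rw [hEu]
      simp
    have hδhalf : δ/2 < ε := by linarith
    have htled : |t/(d:ℝ)| ≤ |t| := by
      rw [abs_div, abs_of_pos hdpos]
      exact div_le_self (abs_nonneg t) (by linarith)
    have htd2 : |t|/(d:ℝ) ≤ |t|/2 := by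
      apply div_le_div_of_nonneg_left (abs_nonneg t) two_pos hdR
    rcases lt_or_gt_of_ne ht0 with htneg | htpos
    · have htI : t ∈ Set.Ioo (-ε) 0 := ⟨by have := (abs_lt.mp htd).1; linarith, htneg⟩
      have harc : Ed d u ∈ sideArc y (Set.Ioo (-ε) 0) := ⟨t, htI, hEu.symm⟩
      have huniq := (hmsel _ harc).2 hEuK
      have humem : u ∈ {w : UnitAddCircle | Ed d w = Ed d u} ∩ K := ⟨rfl, huK⟩
      rw [huniq, Set.mem_singleton_iff] at humem
      have hu : u = y₁ + ((t/(d:ℝ) : ℝ) : UnitAddCircle) := by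
        rw [humem, hEu]
        exact hm t htI
      have hdisty : dist u y₁ = |t/(d:ℝ)| := by
        rw [hu, dist_eq_norm, add_sub_cancel_left, norm_coe_eq (le_trans htled ht2)]
      left
      constructor
      · have h6 : dist w y₁ ≤ dist w u + dist u y₁ := dist_triangle _ _ _
        rw [hdisty] at h6
        have h7 : |t/(d:ℝ)| = |t|/(d:ℝ) := by rw [abs_div, abs_of_pos hdpos]
        rw [h7] at h6
        have h8 : δ/(2*(d:ℝ)) ≤ δ/4 := by
          apply div_le_div_of_nonneg_left (le_of_lt hδ) (by norm_num) (by linarith)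
        linarith
      · exact ⟨t, htI, by linarith, hEu ▸ hEuK⟩
    · have htI : t ∈ Set.Ioo 0 ε := ⟨htpos, by have := (abs_lt.mp htd).2; linarith⟩
      have harc : Ed d u ∈ sideArc y (Set.Ioo 0 ε) := ⟨t, htI, hEu.symm⟩
      have huniq := (hpsel _ harc).2 hEuK
      have humem : u ∈ {w : UnitAddCircle | Ed d w = Ed d u} ∩ K := ⟨rfl, huK⟩
      rw [huniq, Set.mem_singleton_iff] at humem
      have hu : u = y₂ + ((t/(d:ℝ) : ℝ) : UnitAddCircle) := by
        rw [humem, hEu]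
        exact hp t htI
      have hdisty : dist u y₂ = |t/(d:ℝ)| := by
        rw [hu, dist_eq_norm, add_sub_cancel_left, norm_coe_eq (le_trans htled ht2)]
      right
      constructor
      · have h6 : dist w y₂ ≤ dist w u + dist u y₂ := dist_triangle _ _ _
        rw [hdisty] at h6
        have h7 : |t/(d:ℝ)| = |t|/(d:ℝ) := by rw [abs_div, abs_of_pos hdpos]
        rw [h7] at h6
        have h8 : δ/(2*(d:ℝ)) ≤ δ/4 := by
          apply div_le_div_of_nonneg_left (le_of_lt hδ) (by norm_num) (by linarith)
        linarith
      · exact ⟨t, htI, by linarith, hEu ▸ hEuK⟩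
  -- dichotomy per fiber point, per scale
  have stepD : ∀ w, Ed d w = y → w ∈ K → ∀ δ : ℝ, 0 < δ → δ ≤ ε → δ ≤ 1 →
      (∃ q : ℕ, 1 ≤ q ∧ (Ed d)^[q] y = y ∧ w = (Ed d)^[q-1] y) ∨
      (dist w y₁ < δ ∧ ∃ t, t ∈ Set.Ioo (-ε) 0 ∧ |t| < δ ∧ (y + (t : UnitAddCircle)) ∈ K) ∨
      (dist w y₂ < δ ∧ ∃ t, t ∈ Set.Ioo 0 ε ∧ |t| < δ ∧ (y + (t : UnitAddCircle)) ∈ K) := by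
    intro w hwfib hwK δ hδ hδε hδ1
    obtain ⟨z, hzK, n, hn, hdwz, hdwEnz⟩ := hnw w hwK (δ/(2*d)) (by positivity)
    have hsep : ∀ u', Ed d u' = y → dist w u' < δ/(2*d) → w = u' := by
      intro u' hu' hdist'
      by_contra hne
      have h1 := fiber_sep d hd (hwfib.trans hu'.symm) hne
      have h2 : δ/(2*(d:ℝ)) ≤ 1/(d:ℝ) := by
        rw [div_le_div_iff₀ (by positivity) hdpos]
        nlinarith
      linarith
    by_cases hEz : Ed d z = y
    · have hzw : w = z := hsep z hEz hdwz
      have hEnz : (Ed d)^[n] z = (Ed d)^[n-1] y := by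
        rw [← hzw]
        have hn1 : n = (n-1)+1 := by omega
        conv_lhs => rw [hn1]
        rw [Function.iterate_succ_apply, hwfib]
      rw [hEnz] at hdwEnz
      have huK : (Ed d)^[n-1] y ∈ K := hfwd_iter _ y hyK
      by_cases hEu : Ed d ((Ed d)^[n-1] y) = y
      · left
        refine ⟨n, hn, ?_, hsep _ hEu hdwEnz⟩
        have hn1 : n = (n-1)+1 := by omega
        conv_lhs => rw [hn1]
        rw [Function.iterate_succ_apply']
        exact hEu
      · rcases common w hwfib δ hδ hδε _ huK hdwEnz hEu with h | h
        · exact Or.inr (Or.inl h)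
        · exact Or.inr (Or.inr h)
    · rcases common w hwfib δ hδ hδε z hzK hdwz hEz with h | h
      · exact Or.inr (Or.inl h)
      · exact Or.inr (Or.inr h)
  -- global dichotomy per fiber point
  have dichot : ∀ w, Ed d w = y → w ∈ K →
      (∃ q : ℕ, 1 ≤ q ∧ (Ed d)^[q] y = y ∧ w = (Ed d)^[q-1] y) ∨
      (w = y₁ ∧ ∀ δ : ℝ, 0 < δ → ∃ t, t ∈ Set.Ioo (-ε) 0 ∧ |t| < δ ∧
        (y + (t : UnitAddCircle)) ∈ K) ∨
      (w = y₂ ∧ ∀ δ : ℝ, 0 < δ → ∃ t, t ∈ Set.Ioo 0 ε ∧ |t| < δ ∧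
        (y + (t : UnitAddCircle)) ∈ K) := by
    intro w hwfib hwK
    by_cases hq : ∃ q : ℕ, 1 ≤ q ∧ (Ed d)^[q] y = y ∧ w = (Ed d)^[q-1] y
    · exact Or.inl hq
    right
    have hQR : ∀ δ : ℝ, 0 < δ → δ ≤ ε → δ ≤ 1 →
        (dist w y₁ < δ ∧ ∃ t, t ∈ Set.Ioo (-ε) 0 ∧ |t| < δ ∧ (y + (t : UnitAddCircle)) ∈ K) ∨
        (dist w y₂ < δ ∧ ∃ t, t ∈ Set.Ioo 0 ε ∧ |t| < δ ∧ (y + (t : UnitAddCircle)) ∈ K) := by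
      intro δ h1 h2 h3
      rcases stepD w hwfib hwK δ h1 h2 h3 with h | h | h
      · exact absurd h hq
      · exact Or.inl h
      · exact Or.inr h
    by_cases hQall : ∀ δ : ℝ, 0 < δ →
        (dist w y₁ < δ ∧ ∃ t, t ∈ Set.Ioo (-ε) 0 ∧ |t| < δ ∧ (y + (t : UnitAddCircle)) ∈ K)
    · left
      constructor
      · by_contra hne
        exact lt_irrefl _ ((hQall _ (dist_pos.mpr hne)).1)
      · intro δ hδ'
        exact (hQall δ hδ').2
    · right
      obtain ⟨δ₁, hδ₁'⟩ := not_forall.mp hQall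
      rw [Classical.not_imp] at hδ₁'
      obtain ⟨hδ₁pos, hδ₁⟩ := hδ₁' 
      have hRall : ∀ δ : ℝ, 0 < δ →
          (dist w y₂ < δ ∧ ∃ t, t ∈ Set.Ioo 0 ε ∧ |t| < δ ∧ (y + (t : UnitAddCircle)) ∈ K) := by
        intro δ hδ'
        have hδ'pos : 0 < min δ (min δ₁ (min ε 1)) :=
          lt_min hδ' (lt_min hδ₁pos (lt_min hε one_pos))
        have hle₁ : min δ (min δ₁ (min ε 1)) ≤ δ₁ := le_trans (min_le_right _ _) (min_le_left _ _)
        have hleδ : min δ (min δ₁ (min ε 1)) ≤ δ := min_le_left _ _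
        have hleε : min δ (min δ₁ (min ε 1)) ≤ ε :=
          le_trans (min_le_right _ _) (le_trans (min_le_right _ _) (min_le_left _ _))
        have hle1 : min δ (min δ₁ (min ε 1)) ≤ 1 :=
          le_trans (min_le_right _ _) (le_trans (min_le_right _ _) (min_le_right _ _))
        rcases hQR _ hδ'pos hleε hle1 with hQ | hR
        · exfalso
          apply hδ₁
          obtain ⟨hd1', t, htI, htδ', htK⟩ := hQ
          exact ⟨by linarith, t, htI, by linarith, htK⟩
        · obtain ⟨hd2', t, htI, htδ', htK⟩ := hR
          exact ⟨by linarith, t, htI, by linarith, htK⟩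
      constructor
      · by_contra hne
        exact lt_irrefl _ ((hRall _ (dist_pos.mpr hne)).1)
      · intro δ hδ'
        exact (hRall δ hδ').2
  -- two distinct periodic-type preimages are impossible
  have qq : ∀ q q' : ℕ, 1 ≤ q → 1 ≤ q' → (Ed d)^[q] y = y → (Ed d)^[q'] y = y →
      (Ed d)^[q-1] y = (Ed d)^[q'-1] y := by
    have key : ∀ q q' : ℕ, 1 ≤ q → 1 ≤ q' → (Ed d)^[q] y = y →
        (Ed d)^[q-1] y = (Ed d)^[q*q'-1] y := by
      intro q q' hq hq' hqy
      have h1 : ((Ed d)^[q])^[q'-1] y = y := Function.iterate_fixed hqy _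
      have h2 : (Ed d)^[q*(q'-1)] y = y := by rw [Function.iterate_mul]; exact h1
      calc (Ed d)^[q-1] y = (Ed d)^[q-1] ((Ed d)^[q*(q'-1)] y) := by rw [h2]
        _ = (Ed d)^[(q-1) + q*(q'-1)] y := (Function.iterate_add_apply _ _ _ _).symm
        _ = (Ed d)^[q*q'-1] y := by
              congr 1
              obtain ⟨m, rfl⟩ := Nat.exists_eq_add_of_le hq
              obtain ⟨m', rfl⟩ := Nat.exists_eq_add_of_le hq'
              have h3 : (1+m)*(1+m') = 1 + (1 + m - 1 + (1 + m) * (1 + m' - 1)) := by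
                simp [Nat.add_sub_cancel_left]
                ring
              rw [h3]
              omega
    intro q q' hq hq' hqy hqy'
    rw [key q q' hq hq' hqy, key q' q hq' hq hqy', Nat.mul_comm]
  -- one of the two branches is realized in K with accumulation
  have hreal : ((y₁ ∈ K ∧ Ed d y₁ = y) ∧ ∀ δ : ℝ, 0 < δ → ∃ t, t ∈ Set.Ioo (-ε) 0 ∧ |t| < δ ∧
        (y + (t : UnitAddCircle)) ∈ K) ∨
      ((y₂ ∈ K ∧ Ed d y₂ = y) ∧ ∀ δ : ℝ, 0 < δ → ∃ t, t ∈ Set.Ioo 0 ε ∧ |t| < δ ∧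
        (y + (t : UnitAddCircle)) ∈ K) := by
    rcases dichot aa hEa haK with ⟨q, hq, hqy, hqa⟩ | ⟨heq, hacc⟩ | ⟨heq, hacc⟩
    · rcases dichot bb hEb hbK with ⟨q', hq', hqy', hqb⟩ | ⟨heq, hacc⟩ | ⟨heq, hacc⟩
      · exact absurd (hqa.trans ((qq q q' hq hq' hqy hqy').trans hqb.symm)) habne
      · exact Or.inl ⟨⟨heq ▸ hbK, hy₁fib⟩, hacc⟩
      · exact Or.inr ⟨⟨heq ▸ hbK, hy₂fib⟩, hacc⟩
    · exact Or.inl ⟨⟨heq ▸ haK, hy₁fib⟩, hacc⟩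
    · exact Or.inr ⟨⟨heq ▸ haK, hy₂fib⟩, hacc⟩
  -- finish
  have hfin : y₁ ≠ y₂ ∧ {w : UnitAddCircle | Ed d w = y} ∩ K = {y₁, y₂} := by
    rcases hreal with ⟨⟨hy₁K, -⟩, haccL⟩ | ⟨⟨hy₂K, -⟩, haccR⟩
    · have hPsub : ∀ w, Ed d w = y → w ∈ K → w = y₁ ∨ w = y₂ := by
        intro w h1 h2
        rcases dichot w h1 h2 with ⟨q, hq, hqy, hqw⟩ | ⟨h, -⟩ | ⟨h, -⟩
        · exact Or.inl (hqw.trans (lemE_L haccL q hq hqy))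
        · exact Or.inl h
        · exact Or.inr h
      have hy₂K : y₂ ∈ K := by
        by_contra h
        have hall : ∀ w, Ed d w = y → w ∈ K → w = y₁ := by
          intro w h1 h2
          rcases hPsub w h1 h2 with h' | h'
          · exact h'
          · exact absurd (h' ▸ h2) h
        exact habne ((hall aa hEa haK).trans (hall bb hEb hbK).symm)
      have hne : y₁ ≠ y₂ := by
        intro h
        have hall : ∀ w, Ed d w = y → w ∈ K → w = y₁ := by
          intro w h1 h2
          rcases hPsub w h1 h2 with h' | h'
          · exact h'
          · exact h'.trans h.symm
        exact habne ((hall aa hEa haK).trans (hall bb hEb hbK).symm)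
      refine ⟨hne, Set.Subset.antisymm ?_ ?_⟩
      · rintro w ⟨h1, h2⟩
        exact Set.mem_insert_iff.mpr ((hPsub w h1 h2).imp id (fun h => Set.mem_singleton_iff.mpr h))
      · intro w hw
        rcases Set.mem_insert_iff.mp hw with rfl | h
        · exact ⟨hy₁fib, hy₁K⟩
        · rw [Set.mem_singleton_iff] at h
          subst h
          exact ⟨hy₂fib, hy₂K⟩
    · have hPsub : ∀ w, Ed d w = y → w ∈ K → w = y₁ ∨ w = y₂ := by
        intro w h1 h2
        rcases dichot w h1 h2 with ⟨q, hq, hqy, hqw⟩ | ⟨h, -⟩ | ⟨h, -⟩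
        · exact Or.inr (hqw.trans (lemE_R haccR q hq hqy))
        · exact Or.inl h
        · exact Or.inr h
      have hy₁K : y₁ ∈ K := by
        by_contra h
        have hall : ∀ w, Ed d w = y → w ∈ K → w = y₂ := by
          intro w h1 h2
          rcases hPsub w h1 h2 with h' | h'
          · exact absurd (h' ▸ h2) h
          · exact h'
        exact habne ((hall aa hEa haK).trans (hall bb hEb hbK).symm)
      have hne : y₁ ≠ y₂ := by
        intro h
        have hall : ∀ w, Ed d w = y → w ∈ K → w = y₂ := by
          intro w h1 h2
          rcases hPsub w h1 h2 with h' | h'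
          · exact h'.trans h
          · exact h'
        exact habne ((hall aa hEa haK).trans (hall bb hEb hbK).symm)
      refine ⟨hne, Set.Subset.antisymm ?_ ?_⟩
      · rintro w ⟨h1, h2⟩
        exact Set.mem_insert_iff.mpr ((hPsub w h1 h2).imp id (fun h => Set.mem_singleton_iff.mpr h))
      · intro w hw
        rcases Set.mem_insert_iff.mp hw with rfl | h
        · exact ⟨hy₁fib, hy₁K⟩
        · rw [Set.mem_singleton_iff] at h
          subst h
          exact ⟨hy₂fib, hy₂K⟩
  exact ⟨y₁, y₂, hfin.1, hfin.2, htm, htp⟩
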